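/- In every partition of the nine interior edges of K6 into exactly three classes of pairwise noncrossing edges, each class consists of exactly one long edge and two short edges. -/

import Mathlib

/-- The cyclic length of the chord joining vertices `a` and `b` of `K₆`,
whose vertices are labeled by `ZMod 6` in cyclic order around a circle. -/
def cycLen (a b : ZMod 6) : ℕ := min (b - a).val (a - b).val

/-- An interior edge of `K₆`: a 2-element set of vertices at cyclic distance at least 2. -/
def InteriorEdge (e : Finset (ZMod 6)) : Prop :=
  e.card = 2 ∧ ∀ a ∈ e, ∀ b ∈ e, a ≠ b → 2 ≤ cycLen a b

/-- A short edge of `K₆`: a 2-element set of vertices at cyclic distance exactly 2. -/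
def ShortEdge (e : Finset (ZMod 6)) : Prop :=
  e.card = 2 ∧ ∀ a ∈ e, ∀ b ∈ e, a ≠ b → cycLen a b = 2

/-- A long edge of `K₆`: a 2-element set of vertices at cyclic distance exactly 3. -/
def LongEdge (e : Finset (ZMod 6)) : Prop :=
  e.card = 2 ∧ ∀ a ∈ e, ∀ b ∈ e, a ≠ b → cycLen a b = 3

/-- `x` lies in the open cyclic arc from `a` to `b` (in the cyclic order of labels). -/
def InArc (a b x : ZMod 6) : Prop := 0 < (x - a).val ∧ (x - a).val < (b - a).val

/-- Two chords `{a,b}` and `{c,d}` cross iff their endpoint sets are disjoint and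
exactly one of `c`, `d` lies in the open cyclic arc from `a` to `b`. -/
def Crosses (e f : Finset (ZMod 6)) : Prop :=
  Disjoint e f ∧ ∃ a b c d : ZMod 6, a ≠ b ∧ c ≠ d ∧ e = {a, b} ∧ f = {c, d} ∧
    Xor' (InArc a b c) (InArc a b d)

/-- A partition of the interior edges of `K₆` into (nonempty, pairwise disjoint) classes
of pairwise noncrossing edges. -/
def IsSheetPartition (P : Finset (Finset (Finset (ZMod 6)))) : Prop :=
  (∀ C ∈ P, C.Nonempty) ∧
  (∀ C ∈ P, ∀ D ∈ P, C ≠ D → Disjoint C D) ∧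
  (∀ e : Finset (ZMod 6), InteriorEdge e ↔ ∃ C ∈ P, e ∈ C) ∧
  (∀ C ∈ P, ∀ e ∈ C, ∀ f ∈ C, e ≠ f → ¬ Crosses e f)

/-- A bounded-quantifier version of `Crosses` that is cheap to decide. -/
def Crosses' (e f : Finset (ZMod 6)) : Prop :=
  Disjoint e f ∧ ∃ a ∈ e, ∃ b ∈ e, ∃ c ∈ f, ∃ d ∈ f,
    a ≠ b ∧ c ≠ d ∧ e = {a, b} ∧ f = {c, d} ∧ Xor' (InArc a b c) (InArc a b d)

instance : DecidablePred InteriorEdge := fun e => by unfold InteriorEdge; infer_instance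
instance : DecidablePred ShortEdge := fun e => by unfold ShortEdge; infer_instance
instance : DecidablePred LongEdge := fun e => by unfold LongEdge; infer_instance
instance : ∀ a b x, Decidable (InArc a b x) := fun a b x => by unfold InArc; infer_instance
instance : ∀ e f, Decidable (Crosses' e f) := fun e f => by unfold Crosses' Xor'; infer_instance

lemma crosses_iff (e f : Finset (ZMod 6)) : Crosses e f ↔ Crosses' e f := by
  constructor
  · rintro ⟨hd, a, b, c, d, hab, hcd, he, hf, hx⟩
    exact ⟨hd, a, by simp [he], b, by simp [he], c, by simp [hf], d, by simp [hf],
      hab, hcd, he, hf, hx⟩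
  · rintro ⟨hd, a, -, b, -, c, -, d, -, hab, hcd, he, hf, hx⟩
    exact ⟨hd, a, b, c, d, hab, hcd, he, hf, hx⟩

/-- The nine interior edges of `K₆`. -/
def Iset : Finset (Finset (ZMod 6)) :=
  {{0,2},{1,3},{2,4},{3,5},{4,0},{5,1},{0,3},{1,4},{2,5}}

lemma mem_Iset : ∀ e : Finset (ZMod 6), InteriorEdge e ↔ e ∈ Iset := by decide

lemma long_card : (Iset.filter LongEdge).card = 3 := by decide
lemma short_card : (Iset.filter ShortEdge).card = 6 := by decide

set_option maxHeartbeats 2000000 in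
lemma longs_cross : ∀ e ∈ Iset, ∀ f ∈ Iset, LongEdge e → LongEdge f → e ≠ f → Crosses' e f := by
  decide

set_option maxHeartbeats 10000000 in
set_option maxRecDepth 10000 in
lemma three_shorts : ∀ l ∈ Iset, ∀ s1 ∈ Iset, ∀ s2 ∈ Iset, ∀ s3 ∈ Iset,
    ¬(LongEdge l ∧ ShortEdge s1 ∧ ShortEdge s2 ∧
    ShortEdge s3 ∧ s1 ≠ s2 ∧ s1 ≠ s3 ∧ s2 ≠ s3 ∧
    ¬Crosses' l s1 ∧ ¬Crosses' l s2 ∧ ¬Crosses' l s3 ∧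
    ¬Crosses' s1 s2 ∧ ¬Crosses' s1 s3 ∧ ¬Crosses' s2 s3) := by decide

lemma not_long_short : ∀ e ∈ Iset, ¬(LongEdge e ∧ ShortEdge e) := by decide

lemma sum_bound_eq {α : Type*} {P : Finset α} (n : ℕ) (f : α → ℕ)
    (h : ∀ C ∈ P, f C ≤ n) (hs : ∑ C ∈ P, f C = n * P.card) : ∀ C ∈ P, f C = n := by
  by_contra hc
  push_neg at hc
  obtain ⟨C, hC, hne⟩ := hc
  have hlt : ∑ C ∈ P, f C < ∑ _C ∈ P, n :=
    Finset.sum_lt_sum h ⟨C, hC, lt_of_le_of_ne (h C hC) hne⟩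
  rw [Finset.sum_const, smul_eq_mul, mul_comm] at hlt
  omega

/-- In every partition of the nine interior edges of `K₆` into exactly three classes of
pairwise noncrossing edges, each class consists of exactly one long edge and two short
edges. -/
theorem stmt_9 (P : Finset (Finset (Finset (ZMod 6))))
    (hP : IsSheetPartition P) (h3 : P.card = 3) :
    ∀ C ∈ P, {e : Finset (ZMod 6) | e ∈ C ∧ LongEdge e}.ncard = 1 ∧
      {e : Finset (ZMod 6) | e ∈ C ∧ ShortEdge e}.ncard = 2 := by
  obtain ⟨-, hdisj, hcov, hnc'⟩ := hP
  have hnc : ∀ C ∈ P, ∀ e ∈ C, ∀ f ∈ C, e ≠ f → ¬ Crosses' e f := by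
    intro C hC e he f hf hef h
    exact hnc' C hC e he f hf hef ((crosses_iff e f).mpr h)
  -- every class is a subset of Iset
  have hsub : ∀ C ∈ P, C ⊆ Iset := by
    intro C hC e he
    exact (mem_Iset e).mp ((hcov e).mpr ⟨C, hC, he⟩)
  -- the union of the classes is Iset
  have hU : P.biUnion id = Iset := by
    ext e
    simp only [Finset.mem_biUnion, id]
    rw [← mem_Iset, hcov]
  -- sums of filtered cardinalities
  have hsum : ∀ p : Finset (ZMod 6) → Prop, ∀ _ : DecidablePred p,
      ∑ C ∈ P, (C.filter p).card = (Iset.filter p).card := by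
    intro p hp
    have hcb := Finset.card_biUnion (s := P) (t := fun C => C.filter p)
      (fun C hC D hD hne => Finset.disjoint_filter_filter (hdisj C hC D hD hne))
    rw [← hcb, ← hU, Finset.filter_biUnion]
    rfl
  -- long edge count in each class is at most one
  have hlb : ∀ C ∈ P, (C.filter LongEdge).card ≤ 1 := by
    intro C hC
    by_contra hb
    obtain ⟨e, he, f, hf, hef⟩ :=
      Finset.one_lt_card.mp (show 1 < (C.filter LongEdge).card by omega)
    rw [Finset.mem_filter] at he hf
    exact hnc C hC e he.1 f hf.1 hef
      (longs_cross e (hsub C hC he.1) f (hsub C hC hf.1) he.2 hf.2 hef)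
  have hleq : ∀ C ∈ P, (C.filter LongEdge).card = 1 := by
    apply sum_bound_eq 1 _ hlb
    rw [hsum LongEdge inferInstance, long_card, h3]
  -- short edge count in each class is at most two
  have hsb : ∀ C ∈ P, (C.filter ShortEdge).card ≤ 2 := by
    intro C hC
    by_contra hb
    -- get the long edge of the class
    obtain ⟨l, hl⟩ := Finset.card_eq_one.mp (hleq C hC)
    have hlC : l ∈ C.filter LongEdge := hl ▸ Finset.mem_singleton_self l
    rw [Finset.mem_filter] at hlC
    -- get three distinct short edges
    obtain ⟨t, hts, htc⟩ := Finset.exists_subset_card_eq (show 3 ≤ (C.filter ShortEdge).card by omega)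
    obtain ⟨s1, s2, s3, h12, h13, h23, ht⟩ := Finset.card_eq_three.mp htc
    have hs1 := Finset.mem_filter.mp (hts (ht ▸ (by simp : s1 ∈ ({s1,s2,s3} : Finset _))))
    have hs2 := Finset.mem_filter.mp (hts (ht ▸ (by simp : s2 ∈ ({s1,s2,s3} : Finset _))))
    have hs3 := Finset.mem_filter.mp (hts (ht ▸ (by simp : s3 ∈ ({s1,s2,s3} : Finset _))))
    have hne : ∀ s, s ∈ C → ShortEdge s → l ≠ s := by
      intro s hsC hss hls
      exact not_long_short l (hsub C hC hlC.1) ⟨hlC.2, hls ▸ hss⟩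
    exact three_shorts l (hsub C hC hlC.1) s1 (hsub C hC hs1.1) s2 (hsub C hC hs2.1)
      s3 (hsub C hC hs3.1)
      ⟨hlC.2, hs1.2, hs2.2, hs3.2, h12, h13, h23,
        hnc C hC l hlC.1 s1 hs1.1 (hne s1 hs1.1 hs1.2),
        hnc C hC l hlC.1 s2 hs2.1 (hne s2 hs2.1 hs2.2),
        hnc C hC l hlC.1 s3 hs3.1 (hne s3 hs3.1 hs3.2),
        hnc C hC s1 hs1.1 s2 hs2.1 h12,
        hnc C hC s1 hs1.1 s3 hs3.1 h13,
        hnc C hC s2 hs2.1 s3 hs3.1 h23⟩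
  have hseq : ∀ C ∈ P, (C.filter ShortEdge).card = 2 := by
    apply sum_bound_eq 2 _ hsb
    rw [hsum ShortEdge inferInstance, short_card, h3]
  -- conclude
  intro C hC
  have e1 : {e : Finset (ZMod 6) | e ∈ C ∧ LongEdge e} = ↑(C.filter LongEdge) := by
    ext e; simp [Finset.mem_filter]
  have e2 : {e : Finset (ZMod 6) | e ∈ C ∧ ShortEdge e} = ↑(C.filter ShortEdge) := by
    ext e; simp [Finset.mem_filter]
  rw [e1, e2, Set.ncard_coe_finset, Set.ncard_coe_finset]
  exact ⟨hleq C hC, hseq C hC⟩
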